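/- Let κ > 0, T > 0, t ∈ [0,T], τ = T - t, θ > 0, σ² ≥ 0, ν > 0, φ(s) = (1 - e^{-κ(T-s)})/κ, m(u) = θ + (σ² - θ)e^{-κ(u-t)}. Then ν³ ∫_t^T m(u) ( ∫_u^T (∫_s^T e^{-κ(z-s)} φ(z) dz) e^{-κ(s-u)} ds ) du = (ν³ e^{-κτ}/(6κ⁴)) [ θ( 6e^{κτ}(κτ - 4) + κ³τ³ + 6κ²τ² + 18κτ + 24 ) + σ²( 6e^{κτ} - 6 - κ³τ³ - 3κ²τ² - 6κτ ) ]. -/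

import Mathlib

theorem triple_bracket_closed_form
    (κ T t τ θ σsq ν : ℝ) (hκ : 0 < κ) (hT : 0 < T) (ht : t ∈ Set.Icc (0:ℝ) T)
    (hτ : τ = T - t) (hθ : 0 < θ) (hσ : 0 ≤ σsq) (hν : 0 < ν)
    (φ : ℝ → ℝ) (hφ : ∀ s, φ s = (1 - Real.exp (-κ * (T - s))) / κ)
    (m : ℝ → ℝ) (hm : ∀ u, m u = θ + (σsq - θ) * Real.exp (-κ * (u - t))) :
    ν ^ 3 * ∫ u in t..T, m u *
        ∫ s in u..T, (∫ z in s..T, Real.exp (-κ * (z - s)) * φ z) * Real.exp (-κ * (s - u)) =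
      (ν ^ 3 * Real.exp (-κ * τ) / (6 * κ ^ 4)) *
        (θ * (6 * Real.exp (κ * τ) * (κ * τ - 4) +
              κ ^ 3 * τ ^ 3 + 6 * κ ^ 2 * τ ^ 2 + 18 * κ * τ + 24) +
         σsq * (6 * Real.exp (κ * τ) - 6 - κ ^ 3 * τ ^ 3 - 3 * κ ^ 2 * τ ^ 2 - 6 * κ * τ)) := by
  have hκ' : κ ≠ 0 := ne_of_gt hκ
  -- Step 1: inner integral
  have hinner : ∀ s : ℝ, (∫ z in s..T, Real.exp (-κ * (z - s)) * φ z)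
      = (1 - Real.exp (-κ * (T - s))) / κ ^ 2 - (T - s) * Real.exp (-κ * (T - s)) / κ := by
    intro s
    have hcong : ∀ z : ℝ, Real.exp (-κ * (z - s)) * φ z
        = Real.exp (-κ * (z - s)) / κ - Real.exp (-κ * (T - s)) / κ := by
      intro z
      have h : Real.exp (-κ * (z - s)) * Real.exp (-κ * (T - z)) = Real.exp (-κ * (T - s)) := by
        rw [← Real.exp_add]; congr 1; ring
      rw [hφ]
      linear_combination (-1 / κ : ℝ) * h
    have hder : ∀ z ∈ Set.uIcc s T,
        HasDerivAt (fun z => -Real.exp (-κ * (z - s)) / κ ^ 2 - z * (Real.exp (-κ * (T - s)) / κ))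
          (Real.exp (-κ * (z - s)) / κ - Real.exp (-κ * (T - s)) / κ) z := by
      intro z _
      have h1 : HasDerivAt (fun z : ℝ => Real.exp (-κ * (z - s))) (-κ * Real.exp (-κ * (z - s))) z := by
        have := (((hasDerivAt_id z).sub_const s).const_mul (-κ)).exp
        convert this using 1 <;> (try simp only [id_eq]) <;> ring_nf
      have h2 := (h1.neg.div_const (κ ^ 2)).sub
        ((hasDerivAt_id z).mul_const (Real.exp (-κ * (T - s)) / κ))
      refine h2.congr_deriv ?_
      try simp only [id_eq]
      field_simp
      try ring
    have hint : IntervalIntegrable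
        (fun z => Real.exp (-κ * (z - s)) / κ - Real.exp (-κ * (T - s)) / κ)
        MeasureTheory.volume s T := by
      apply Continuous.intervalIntegrable; fun_prop
    calc (∫ z in s..T, Real.exp (-κ * (z - s)) * φ z)
        = ∫ z in s..T, (Real.exp (-κ * (z - s)) / κ - Real.exp (-κ * (T - s)) / κ) :=
          intervalIntegral.integral_congr (fun z _ => hcong z)
      _ = (-Real.exp (-κ * (T - s)) / κ ^ 2 - T * (Real.exp (-κ * (T - s)) / κ))
          - (-Real.exp (-κ * (s - s)) / κ ^ 2 - s * (Real.exp (-κ * (T - s)) / κ)) :=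
          intervalIntegral.integral_eq_sub_of_hasDerivAt hder hint
      _ = (1 - Real.exp (-κ * (T - s))) / κ ^ 2 - (T - s) * Real.exp (-κ * (T - s)) / κ := by
          simp only [sub_self, mul_zero, Real.exp_zero]
          ring
  -- Step 2: middle integral
  have hmid : ∀ u : ℝ,
      (∫ s in u..T, (∫ z in s..T, Real.exp (-κ * (z - s)) * φ z) * Real.exp (-κ * (s - u)))
      = (1 - Real.exp (-κ * (T - u))) / κ ^ 3 - (T - u) * Real.exp (-κ * (T - u)) / κ ^ 2
        - (T - u) ^ 2 * Real.exp (-κ * (T - u)) / (2 * κ) := by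
    intro u
    have hcong : ∀ s : ℝ,
        (∫ z in s..T, Real.exp (-κ * (z - s)) * φ z) * Real.exp (-κ * (s - u))
        = Real.exp (-κ * (s - u)) / κ ^ 2 - Real.exp (-κ * (T - u)) / κ ^ 2
          - (T - s) * (Real.exp (-κ * (T - u)) / κ) := by
      intro s
      have h : Real.exp (-κ * (T - s)) * Real.exp (-κ * (s - u)) = Real.exp (-κ * (T - u)) := by
        rw [← Real.exp_add]; congr 1; ring
      rw [hinner s]
      linear_combination (-(1 / κ ^ 2) - (T - s) / κ) * h
    have hder : ∀ s ∈ Set.uIcc u T,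
        HasDerivAt (fun s => -Real.exp (-κ * (s - u)) / κ ^ 3
            - s * (Real.exp (-κ * (T - u)) / κ ^ 2)
            + (T - s) ^ 2 * (Real.exp (-κ * (T - u)) / (2 * κ)))
          (Real.exp (-κ * (s - u)) / κ ^ 2 - Real.exp (-κ * (T - u)) / κ ^ 2
            - (T - s) * (Real.exp (-κ * (T - u)) / κ)) s := by
      intro s _
      have h1 : HasDerivAt (fun s : ℝ => Real.exp (-κ * (s - u))) (-κ * Real.exp (-κ * (s - u))) s := by
        have := (((hasDerivAt_id s).sub_const u).const_mul (-κ)).exp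
        convert this using 1 <;> (try simp only [id_eq]) <;> ring_nf
      have h2 := ((h1.neg.div_const (κ ^ 3)).sub
          ((hasDerivAt_id s).mul_const (Real.exp (-κ * (T - u)) / κ ^ 2))).add
        ((((hasDerivAt_id s).const_sub T).pow 2).mul_const (Real.exp (-κ * (T - u)) / (2 * κ)))
      refine h2.congr_deriv ?_
      try simp only [id_eq]
      field_simp
      try ring
    have hint : IntervalIntegrable
        (fun s => Real.exp (-κ * (s - u)) / κ ^ 2 - Real.exp (-κ * (T - u)) / κ ^ 2
          - (T - s) * (Real.exp (-κ * (T - u)) / κ)) MeasureTheory.volume u T := by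
      apply Continuous.intervalIntegrable; fun_prop
    calc (∫ s in u..T, (∫ z in s..T, Real.exp (-κ * (z - s)) * φ z) * Real.exp (-κ * (s - u)))
        = ∫ s in u..T, (Real.exp (-κ * (s - u)) / κ ^ 2 - Real.exp (-κ * (T - u)) / κ ^ 2
            - (T - s) * (Real.exp (-κ * (T - u)) / κ)) :=
          intervalIntegral.integral_congr (fun s _ => hcong s)
      _ = (-Real.exp (-κ * (T - u)) / κ ^ 3 - T * (Real.exp (-κ * (T - u)) / κ ^ 2)
            + (T - T) ^ 2 * (Real.exp (-κ * (T - u)) / (2 * κ)))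
          - (-Real.exp (-κ * (u - u)) / κ ^ 3 - u * (Real.exp (-κ * (T - u)) / κ ^ 2)
            + (T - u) ^ 2 * (Real.exp (-κ * (T - u)) / (2 * κ))) :=
          intervalIntegral.integral_eq_sub_of_hasDerivAt hder hint
      _ = (1 - Real.exp (-κ * (T - u))) / κ ^ 3 - (T - u) * Real.exp (-κ * (T - u)) / κ ^ 2
          - (T - u) ^ 2 * Real.exp (-κ * (T - u)) / (2 * κ) := by
          simp only [sub_self, mul_zero, Real.exp_zero]
          ring
  -- Step 3: outer integral
  have hcong3 : ∀ u : ℝ, m u *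
      ((1 - Real.exp (-κ * (T - u))) / κ ^ 3 - (T - u) * Real.exp (-κ * (T - u)) / κ ^ 2
        - (T - u) ^ 2 * Real.exp (-κ * (T - u)) / (2 * κ))
      = θ / κ ^ 3 - θ * Real.exp (-κ * (T - u)) / κ ^ 3
        - θ * (T - u) * Real.exp (-κ * (T - u)) / κ ^ 2
        - θ * (T - u) ^ 2 * Real.exp (-κ * (T - u)) / (2 * κ)
        + (σsq - θ) * (Real.exp (-κ * (u - t)) / κ ^ 3 - Real.exp (-κ * (T - t)) / κ ^ 3
          - (T - u) * Real.exp (-κ * (T - t)) / κ ^ 2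
          - (T - u) ^ 2 * Real.exp (-κ * (T - t)) / (2 * κ)) := by
    intro u
    have h : Real.exp (-κ * (u - t)) * Real.exp (-κ * (T - u)) = Real.exp (-κ * (T - t)) := by
      rw [← Real.exp_add]; congr 1; ring
    rw [hm u]
    linear_combination ((σsq - θ) * (-(1 / κ ^ 3) - (T - u) / κ ^ 2 - (T - u) ^ 2 / (2 * κ))) * h
  have hder3 : ∀ u ∈ Set.uIcc t T,
      HasDerivAt (fun u =>
          θ * u / κ ^ 3
          - (σsq - θ) * Real.exp (-κ * (T - t)) * u / κ ^ 3
          + (σsq - θ) * (T - u) ^ 2 * Real.exp (-κ * (T - t)) / (2 * κ ^ 2)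
          + (σsq - θ) * (T - u) ^ 3 * Real.exp (-κ * (T - t)) / (6 * κ)
          + (-3 * θ / κ ^ 4 - 2 * θ * (T - u) / κ ^ 3 - θ * (T - u) ^ 2 / (2 * κ ^ 2))
            * Real.exp (-κ * (T - u))
          - (σsq - θ) / κ ^ 4 * Real.exp (-κ * (u - t)))
        (θ / κ ^ 3 - θ * Real.exp (-κ * (T - u)) / κ ^ 3
          - θ * (T - u) * Real.exp (-κ * (T - u)) / κ ^ 2
          - θ * (T - u) ^ 2 * Real.exp (-κ * (T - u)) / (2 * κ)
          + (σsq - θ) * (Real.exp (-κ * (u - t)) / κ ^ 3 - Real.exp (-κ * (T - t)) / κ ^ 3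
            - (T - u) * Real.exp (-κ * (T - t)) / κ ^ 2
            - (T - u) ^ 2 * Real.exp (-κ * (T - t)) / (2 * κ))) u := by
    intro u _
    have hE : HasDerivAt (fun u : ℝ => Real.exp (-κ * (T - u))) (κ * Real.exp (-κ * (T - u))) u := by
      have := (((hasDerivAt_id u).const_sub T).const_mul (-κ)).exp
      convert this using 1 <;> (try simp only [id_eq]) <;> ring_nf
    have hA : HasDerivAt (fun u : ℝ => Real.exp (-κ * (u - t))) (-κ * Real.exp (-κ * (u - t))) u := by
      have := (((hasDerivAt_id u).sub_const t).const_mul (-κ)).exp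
      convert this using 1 <;> (try simp only [id_eq]) <;> ring_nf
    have t1 := ((hasDerivAt_id u).const_mul θ).div_const (κ ^ 3)
    have t2 := ((hasDerivAt_id u).const_mul ((σsq - θ) * Real.exp (-κ * (T - t)))).div_const (κ ^ 3)
    have t3 := (((((hasDerivAt_id u).const_sub T).pow 2).const_mul (σsq - θ)).mul_const
      (Real.exp (-κ * (T - t)))).div_const (2 * κ ^ 2)
    have t4 := (((((hasDerivAt_id u).const_sub T).pow 3).const_mul (σsq - θ)).mul_const
      (Real.exp (-κ * (T - t)))).div_const (6 * κ)
    have hQ : HasDerivAt (fun u : ℝ =>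
        -3 * θ / κ ^ 4 - 2 * θ * (T - u) / κ ^ 3 - θ * (T - u) ^ 2 / (2 * κ ^ 2))
        (2 * θ / κ ^ 3 + θ * (T - u) / κ ^ 2) u := by
      have q1 := ((((hasDerivAt_id u).const_sub T).const_mul (2 * θ)).div_const (κ ^ 3))
      have q2 := ((((hasDerivAt_id u).const_sub T).pow 2).const_mul θ).div_const (2 * κ ^ 2)
      have := ((hasDerivAt_const u (-3 * θ / κ ^ 4)).sub q1).sub q2
      refine this.congr_deriv ?_
      try simp only [id_eq]
      ring
    have t5 := hQ.mul hE
    have t6 := hA.const_mul ((σsq - θ) / κ ^ 4)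
    have h := ((((t1.sub t2).add t3).add t4).add t5).sub t6
    refine h.congr_deriv ?_
    try simp only [id_eq]
    field_simp
    try ring
  have hint3 : IntervalIntegrable (fun u =>
      θ / κ ^ 3 - θ * Real.exp (-κ * (T - u)) / κ ^ 3
        - θ * (T - u) * Real.exp (-κ * (T - u)) / κ ^ 2
        - θ * (T - u) ^ 2 * Real.exp (-κ * (T - u)) / (2 * κ)
        + (σsq - θ) * (Real.exp (-κ * (u - t)) / κ ^ 3 - Real.exp (-κ * (T - t)) / κ ^ 3
          - (T - u) * Real.exp (-κ * (T - t)) / κ ^ 2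
          - (T - u) ^ 2 * Real.exp (-κ * (T - t)) / (2 * κ))) MeasureTheory.volume t T := by
    apply Continuous.intervalIntegrable; fun_prop
  have houter : (∫ u in t..T, m u *
      ∫ s in u..T, (∫ z in s..T, Real.exp (-κ * (z - s)) * φ z) * Real.exp (-κ * (s - u)))
      = (θ * T / κ ^ 3
          - (σsq - θ) * Real.exp (-κ * (T - t)) * T / κ ^ 3
          + (σsq - θ) * (T - T) ^ 2 * Real.exp (-κ * (T - t)) / (2 * κ ^ 2)
          + (σsq - θ) * (T - T) ^ 3 * Real.exp (-κ * (T - t)) / (6 * κ)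
          + (-3 * θ / κ ^ 4 - 2 * θ * (T - T) / κ ^ 3 - θ * (T - T) ^ 2 / (2 * κ ^ 2))
            * Real.exp (-κ * (T - T))
          - (σsq - θ) / κ ^ 4 * Real.exp (-κ * (T - t)))
        - (θ * t / κ ^ 3
          - (σsq - θ) * Real.exp (-κ * (T - t)) * t / κ ^ 3
          + (σsq - θ) * (T - t) ^ 2 * Real.exp (-κ * (T - t)) / (2 * κ ^ 2)
          + (σsq - θ) * (T - t) ^ 3 * Real.exp (-κ * (T - t)) / (6 * κ)
          + (-3 * θ / κ ^ 4 - 2 * θ * (T - t) / κ ^ 3 - θ * (T - t) ^ 2 / (2 * κ ^ 2))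
            * Real.exp (-κ * (T - t))
          - (σsq - θ) / κ ^ 4 * Real.exp (-κ * (t - t))) := by
    calc (∫ u in t..T, m u *
        ∫ s in u..T, (∫ z in s..T, Real.exp (-κ * (z - s)) * φ z) * Real.exp (-κ * (s - u)))
        = ∫ u in t..T, (θ / κ ^ 3 - θ * Real.exp (-κ * (T - u)) / κ ^ 3
            - θ * (T - u) * Real.exp (-κ * (T - u)) / κ ^ 2
            - θ * (T - u) ^ 2 * Real.exp (-κ * (T - u)) / (2 * κ)
            + (σsq - θ) * (Real.exp (-κ * (u - t)) / κ ^ 3 - Real.exp (-κ * (T - t)) / κ ^ 3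
              - (T - u) * Real.exp (-κ * (T - t)) / κ ^ 2
              - (T - u) ^ 2 * Real.exp (-κ * (T - t)) / (2 * κ))) := by
          apply intervalIntegral.integral_congr
          intro u _
          simp only [hmid]
          exact hcong3 u
      _ = _ := intervalIntegral.integral_eq_sub_of_hasDerivAt hder3 hint3
  rw [houter]
  subst hτ
  have hY : Real.exp (κ * (T - t)) = (Real.exp (-κ * (T - t)))⁻¹ := by
    rw [← Real.exp_neg]; congr 1; ring
  rw [hY]
  simp only [sub_self, mul_zero, Real.exp_zero]
  field_simp
  ring
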